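/- The operator τ_P is tripotent: for any node-edge-checkable problems Π and P, the problems τ_P(Π) and τ_P(τ_P(τ_P(Π))) are equivalent, i.e., each admits a zero-round relaxation to the other. -/
import Mathlib


set_option autoImplicit false

/-- A node-edge-checkable problem with (node) degree `Δ`: a set of node
configurations (cardinality-`Δ` multisets of labels) and a set of edge
configurations (cardinality-`2` multisets of labels). -/
structure NEProblem (Δ : ℕ) (Λ : Type) where
  nodeC : Set (Multiset Λ)
  edgeC : Set (Multiset Λ)
  node_card : ∀ m ∈ nodeC, Multiset.card m = Δ
  edge_card : ∀ m ∈ edgeC, Multiset.card m = 2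

/-- Nonempty subsets of `Λ`: the labels of `R*(P)`, `R(P)`, `R̄(P)`. -/
abbrev SubS (Λ : Type) : Type := {S : Set Λ // S.Nonempty}

variable {Δ : ℕ} {Λ Λ' Λ'' ΛP ΛI ΛF : Type}

/-- `f` is a port-local relaxation function from `P` to `P'`. -/
def IsPortLocalRelax (P : NEProblem Δ Λ) (P' : NEProblem Δ Λ') (f : Λ → Λ') : Prop :=
  (∀ m ∈ P.nodeC, m.map f ∈ P'.nodeC) ∧ (∀ m ∈ P.edgeC, m.map f ∈ P'.edgeC)

/-- An occurrence-based relaxation witness from `P` to `P'`: for each node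
configuration `C` of `P`, `p C` is a multiset of pairs matching each occurrence
of a label in `C` with its image label, such that node configurations are mapped
into node configurations of `P'`, and any two occurrences forming an edge
configuration of `P` are mapped to an edge configuration of `P'`. -/
def IsRelaxWitness (P : NEProblem Δ Λ) (P' : NEProblem Δ Λ')
    (p : Multiset Λ → Multiset (Λ × Λ')) : Prop :=
  (∀ C ∈ P.nodeC, (p C).map Prod.fst = C) ∧
  (∀ C ∈ P.nodeC, (p C).map Prod.snd ∈ P'.nodeC) ∧
  (∀ C ∈ P.nodeC, ∀ C' ∈ P.nodeC, ∀ q ∈ p C, ∀ q' ∈ p C',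
    ({q.1, q'.1} : Multiset Λ) ∈ P.edgeC → ({q.2, q'.2} : Multiset Λ') ∈ P'.edgeC)

/-- `P →0 P'` : `P'` is a relaxation of `P` (occurrence-based sense). -/
def Relaxes (P : NEProblem Δ Λ) (P' : NEProblem Δ Λ') : Prop :=
  ∃ p, IsRelaxWitness P P' p

/-- An edge-based relaxation witness from `P` to `P'` (dual of `IsRelaxWitness`). -/
def IsEdgeRelaxWitness (P : NEProblem Δ Λ) (P' : NEProblem Δ Λ')
    (p : Multiset Λ → Multiset (Λ × Λ')) : Prop :=
  (∀ C ∈ P.edgeC, (p C).map Prod.fst = C) ∧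
  (∀ C ∈ P.edgeC, (p C).map Prod.snd ∈ P'.edgeC) ∧
  (∀ s : Multiset (Λ × Λ'), (∀ q ∈ s, ∃ C ∈ P.edgeC, q ∈ p C) →
    s.map Prod.fst ∈ P.nodeC → s.map Prod.snd ∈ P'.nodeC)

/-- `P'` is an edge-based relaxation of `P`. -/
def EdgeRelaxes (P : NEProblem Δ Λ) (P' : NEProblem Δ Λ') : Prop :=
  ∃ p, IsEdgeRelaxWitness P P' p

/-- The problem `R*(P)`: labels are nonempty subsets of the labels of `P`;
a node configuration is any `Δ`-multiset of sets admitting a selection forming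
a node configuration of `P`; an edge configuration is any pair of sets all of
whose selections form edge configurations of `P`. -/
def RStar (P : NEProblem Δ Λ) : NEProblem Δ (SubS Λ) where
  nodeC := {m | Multiset.card m = Δ ∧ ∃ p : Multiset (SubS Λ × Λ),
    p.map Prod.fst = m ∧ (∀ q ∈ p, q.2 ∈ q.1.val) ∧ p.map Prod.snd ∈ P.nodeC}
  edgeC := {m | ∃ S₁ S₂ : SubS Λ, m = {S₁, S₂} ∧
    ∀ L₁ ∈ S₁.val, ∀ L₂ ∈ S₂.val, ({L₁, L₂} : Multiset Λ) ∈ P.edgeC}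
  node_card := fun _ hm => hm.1
  edge_card := by rintro m ⟨S₁, S₂, rfl, -⟩; rfl

/-- The product `P × P'` of two node-edge-checkable problems. -/
def prodP (P : NEProblem Δ Λ) (P' : NEProblem Δ Λ') : NEProblem Δ (Λ × Λ') where
  nodeC := {m | m.map Prod.fst ∈ P.nodeC ∧ m.map Prod.snd ∈ P'.nodeC}
  edgeC := {m | m.map Prod.fst ∈ P.edgeC ∧ m.map Prod.snd ∈ P'.edgeC}
  node_card := fun m hm => by have := P.node_card _ hm.1; simpa using this
  edge_card := fun m hm => by have := P.edge_card _ hm.1; simpa using this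

/-- The tripotent input `τ_P(Pi)`: labels are functions from the labels of `Pi`
to the labels of `R*(P)`; a multiset of functions is a node (resp. edge)
configuration iff applying it (in any matching) to every node (resp. edge)
configuration of `Pi` yields a node (resp. edge) configuration of `R*(P)`. -/
def tau (P : NEProblem Δ ΛP) (Pi : NEProblem Δ Λ) : NEProblem Δ (Λ → SubS ΛP) where
  nodeC := {m | Multiset.card m = Δ ∧ ∀ C ∈ Pi.nodeC,
    ∀ p : Multiset ((Λ → SubS ΛP) × Λ), p.map Prod.fst = m → p.map Prod.snd = C →
      p.map (fun q => q.1 q.2) ∈ (RStar P).nodeC}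
  edgeC := {m | Multiset.card m = 2 ∧ ∀ C ∈ Pi.edgeC,
    ∀ p : Multiset ((Λ → SubS ΛP) × Λ), p.map Prod.fst = m → p.map Prod.snd = C →
      p.map (fun q => q.1 q.2) ∈ (RStar P).edgeC}
  node_card := fun _ hm => hm.1
  edge_card := fun _ hm => hm.1

/-- A pair `{S₁, S₂}` of nonempty sets of labels satisfies the universal
quantifier w.r.t. the edge constraint of `P`. -/
def univEdge (P : NEProblem Δ Λ) (m : Multiset (SubS Λ)) : Prop :=
  ∃ S₁ S₂ : SubS Λ, m = {S₁, S₂} ∧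
    ∀ L₁ ∈ S₁.val, ∀ L₂ ∈ S₂.val, ({L₁, L₂} : Multiset Λ) ∈ P.edgeC

/-- A `Δ`-multiset of nonempty sets of labels satisfies the universal quantifier
w.r.t. the node constraint of `P`. -/
def univNode (P : NEProblem Δ Λ) (m : Multiset (SubS Λ)) : Prop :=
  Multiset.card m = Δ ∧ ∀ p : Multiset (SubS Λ × Λ),
    p.map Prod.fst = m → (∀ q ∈ p, q.2 ∈ q.1.val) → p.map Prod.snd ∈ P.nodeC

/-- `m'` strictly dominates `m` (coordinatewise inclusion up to permutation,
strict in at least one coordinate). -/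
def strictlyDominates (m' m : Multiset (SubS Λ)) : Prop :=
  ∃ p : Multiset (SubS Λ × SubS Λ), p.map Prod.fst = m' ∧ p.map Prod.snd = m ∧
    (∀ q ∈ p, q.2.val ⊆ q.1.val) ∧ ∃ q ∈ p, q.2.val ⊂ q.1.val

/-- The edge constraint of `R(P)`: maximal universally-satisfying pairs. -/
def REedge (P : NEProblem Δ Λ) : Set (Multiset (SubS Λ)) :=
  {m | univEdge P m ∧ ∀ m', univEdge P m' → ¬ strictlyDominates m' m}

/-- The problem `R(P)`. -/
def RE (P : NEProblem Δ Λ) : NEProblem Δ (SubS Λ) where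
  nodeC := {m | Multiset.card m = Δ ∧ (∀ S ∈ m, ∃ e ∈ REedge P, S ∈ e) ∧
    ∃ p : Multiset (SubS Λ × Λ), p.map Prod.fst = m ∧ (∀ q ∈ p, q.2 ∈ q.1.val) ∧
      p.map Prod.snd ∈ P.nodeC}
  edgeC := REedge P
  node_card := fun _ hm => hm.1
  edge_card := by rintro m ⟨⟨S₁, S₂, rfl, -⟩, -⟩; rfl

/-- The node constraint of `R̄(P)`: maximal universally-satisfying `Δ`-multisets. -/
def REbarNode (P : NEProblem Δ Λ) : Set (Multiset (SubS Λ)) :=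
  {m | univNode P m ∧ ∀ m', univNode P m' → ¬ strictlyDominates m' m}

/-- The problem `R̄(P)` (dual of `R(P)`). -/
def REbar (P : NEProblem Δ Λ) : NEProblem Δ (SubS Λ) where
  nodeC := REbarNode P
  edgeC := {m | ∃ S₁ S₂ : SubS Λ, m = {S₁, S₂} ∧
    (∃ e ∈ REbarNode P, S₁ ∈ e) ∧ (∃ e ∈ REbarNode P, S₂ ∈ e) ∧
    ∃ L₁ ∈ S₁.val, ∃ L₂ ∈ S₂.val, ({L₁, L₂} : Multiset Λ) ∈ P.edgeC}
  node_card := fun _ hm => hm.1.1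
  edge_card := by rintro m ⟨S₁, S₂, rfl, -⟩; rfl

/-- One step of round elimination: `Q = R̄ ∘ R`. -/
def Qop (P : NEProblem Δ Λ) : NEProblem Δ (SubS (SubS Λ)) := REbar (RE P)

/-- Label type of `Q^i(P)`. -/
def QIterType (Λ : Type) : ℕ → Type
  | 0 => Λ
  | i + 1 => SubS (SubS (QIterType Λ i))

/-- `Q^i(P)`. -/
def QIter (P : NEProblem Δ Λ) : (i : ℕ) → NEProblem Δ (QIterType Λ i)
  | 0 => P
  | i + 1 => Qop (QIter P i)

/-- Labels of `P` occurring in some configuration of `P`. -/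
def usedLabels (P : NEProblem Δ Λ) : Set Λ :=
  {L | (∃ C ∈ P.nodeC, L ∈ C) ∨ (∃ C ∈ P.edgeC, L ∈ C)}

/-- `P'` arises from `P` by a bijective renaming of (used) labels. -/
def EquivUpToRenaming (P : NEProblem Δ Λ) (P' : NEProblem Δ Λ') : Prop :=
  ∃ f : Λ → Λ', Set.InjOn f (usedLabels P) ∧
    P'.nodeC = (fun m => m.map f) '' P.nodeC ∧
    P'.edgeC = (fun m => m.map f) '' P.edgeC

/-- The trivial one-label problem. -/
def trivProblem (Δ : ℕ) : NEProblem Δ Unit where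
  nodeC := {Multiset.replicate Δ ()}
  edgeC := {Multiset.replicate 2 ()}
  node_card := by intro m hm; rw [Set.mem_singleton_iff] at hm; subst hm; simp
  edge_card := by intro m hm; rw [Set.mem_singleton_iff] at hm; subst hm; simp

section TauAux

private lemma rel_exists {α β : Type*} {r : α → β → Prop} {s : Multiset α} {t : Multiset β}
    (h : Multiset.Rel r s t) :
    ∃ w : Multiset (α × β), w.map Prod.fst = s ∧ w.map Prod.snd = t ∧ ∀ q ∈ w, r q.1 q.2 := by
  induction h with
  | zero => exact ⟨0, by simp⟩
  | @cons a b s t hab h ih =>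
    obtain ⟨w, h1, h2, h3⟩ := ih
    refine ⟨(a, b) ::ₘ w, by simp [h1], by simp [h2], ?_⟩
    intro q hq
    rcases Multiset.mem_cons.1 hq with rfl | hq
    · exact hab
    · exact h3 q hq

private lemma map_eq_map_exists {α β γ : Type*} {φ : α → γ} {ψ : β → γ}
    {s : Multiset α} {t : Multiset β} (h : s.map φ = t.map ψ) :
    ∃ w : Multiset (α × β), w.map Prod.fst = s ∧ w.map Prod.snd = t ∧
      ∀ q ∈ w, φ q.1 = ψ q.2 := by
  have h' : Multiset.Rel (· = ·) (s.map φ) (t.map ψ) := Multiset.rel_eq.2 h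
  rw [Multiset.rel_map_left, Multiset.rel_map_right] at h'
  exact rel_exists h'

private lemma portLocal_relaxes {Δ : ℕ} {Λ Λ' : Type} {P : NEProblem Δ Λ}
    {P' : NEProblem Δ Λ'} {f : Λ → Λ'} (h : IsPortLocalRelax P P' f) : Relaxes P P' := by
  refine ⟨fun C => C.map (fun x => (x, f x)), ?_, ?_, ?_⟩
  · intro C _; simp [Multiset.map_map]
  · intro C hC
    have := h.1 C hC
    simpa [Multiset.map_map] using this
  · intro C hC C' hC' q hq q' hq' he
    obtain ⟨x, _, rfl⟩ := Multiset.mem_map.1 hq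
    obtain ⟨x', _, rfl⟩ := Multiset.mem_map.1 hq'
    have := h.2 _ he
    simpa using this

variable {Δ : ℕ} {ΛP ΛX : Type}

/-- Core computation used both for the forward and backward direction. -/
private lemma eval_aux {SPi : Set (Multiset ΛX)} {SR : Set (Multiset (SubS ΛP))}
    {C : Multiset ΛX} (hC : C ∈ SPi)
    {D : Multiset (ΛX → SubS ΛP)}
    (hD : ∀ C' ∈ SPi, ∀ p : Multiset ((ΛX → SubS ΛP) × ΛX),
      p.map Prod.fst = D → p.map Prod.snd = C' → p.map (fun q => q.1 q.2) ∈ SR)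
    {p : Multiset (((ΛX → SubS ΛP) → SubS ΛP) × (ΛX → SubS ΛP))}
    (hp1 : p.map Prod.fst = C.map (fun x (h : ΛX → SubS ΛP) => h x))
    (hp2 : p.map Prod.snd = D) :
    p.map (fun q => q.1 q.2) ∈ SR := by
  obtain ⟨w, hw1, hw2, hw3⟩ := map_eq_map_exists hp1
  have h1 : (w.map (fun q => (q.1.2, q.2))).map Prod.fst = D := by
    rw [← hp2, ← hw1]; simp only [Multiset.map_map]; rfl
  have h2 : (w.map (fun q => (q.1.2, q.2))).map Prod.snd = C := by
    rw [Multiset.map_map]; exact hw2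
  have key := hD C hC _ h1 h2
  rw [Multiset.map_map] at key
  rw [← hw1, Multiset.map_map]
  have : w.map ((fun q : ((ΛX → SubS ΛP) → SubS ΛP) × (ΛX → SubS ΛP) => q.1 q.2) ∘ Prod.fst)
      = w.map ((fun q : (ΛX → SubS ΛP) × ΛX => q.1 q.2) ∘ (fun q => (q.1.2, q.2))) := by
    refine Multiset.map_congr rfl fun q hq => ?_
    simp only [Function.comp]
    rw [hw3 q hq]
  rw [this]; exact key

private lemma eval_node (P : NEProblem Δ ΛP) (X : NEProblem Δ ΛX)
    {C : Multiset ΛX} (hC : C ∈ X.nodeC) :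
    C.map (fun x (h : ΛX → SubS ΛP) => h x) ∈ (tau P (tau P X)).nodeC := by
  refine ⟨by simpa using X.node_card C hC, ?_⟩
  intro D hD p hp1 hp2
  exact eval_aux hC hD.2 hp1 hp2

private lemma eval_edge (P : NEProblem Δ ΛP) (X : NEProblem Δ ΛX)
    {C : Multiset ΛX} (hC : C ∈ X.edgeC) :
    C.map (fun x (h : ΛX → SubS ΛP) => h x) ∈ (tau P (tau P X)).edgeC := by
  refine ⟨by simpa using X.edge_card C hC, ?_⟩
  intro D hD p hp1 hp2
  exact eval_aux hC hD.2 hp1 hp2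

/-- Core computation for the backward direction. -/
private lemma back_aux {Λ : Type}
    {S2 : Set (Multiset ((Λ → SubS ΛP) → SubS ΛP))} {SR : Set (Multiset (SubS ΛP))}
    {C : Multiset Λ}
    (hC2 : C.map (fun x (g : Λ → SubS ΛP) => g x) ∈ S2)
    {m : Multiset (((Λ → SubS ΛP) → SubS ΛP) → SubS ΛP)}
    (hm : ∀ C' ∈ S2, ∀ p : Multiset ((((Λ → SubS ΛP) → SubS ΛP) → SubS ΛP) ×
        ((Λ → SubS ΛP) → SubS ΛP)),
      p.map Prod.fst = m → p.map Prod.snd = C' → p.map (fun q => q.1 q.2) ∈ SR)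
    {p : Multiset ((Λ → SubS ΛP) × Λ)}
    (hp1 : p.map Prod.fst = m.map
      (fun F (x : Λ) => F (fun g : Λ → SubS ΛP => g x)))
    (hp2 : p.map Prod.snd = C) :
    p.map (fun q => q.1 q.2) ∈ SR := by
  obtain ⟨w, hw1, hw2, hw3⟩ := map_eq_map_exists hp1
  have h1 : (w.map (fun q => (q.2, fun g : Λ → SubS ΛP => g q.1.2))).map Prod.fst = m := by
    rw [Multiset.map_map]; exact hw2
  have h2 : (w.map (fun q => (q.2, fun g : Λ → SubS ΛP => g q.1.2))).map Prod.snd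
      = C.map (fun x (g : Λ → SubS ΛP) => g x) := by
    rw [← hp2, ← hw1]; simp only [Multiset.map_map]; rfl
  have key := hm _ hC2 _ h1 h2
  rw [Multiset.map_map] at key
  rw [← hw1, Multiset.map_map]
  have : w.map ((fun q : (Λ → SubS ΛP) × Λ => q.1 q.2) ∘ Prod.fst)
      = w.map ((fun q : (((Λ → SubS ΛP) → SubS ΛP) → SubS ΛP) × ((Λ → SubS ΛP) → SubS ΛP)
          => q.1 q.2) ∘ (fun q => (q.2, fun g : Λ → SubS ΛP => g q.1.2))) := by
    refine Multiset.map_congr rfl fun q hq => ?_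
    simp only [Function.comp]
    rw [hw3 q hq]
  rw [this]; exact key

end TauAux

/-- `τ_P` is tripotent: `τ_P(Pi)` and `τ_P(τ_P(τ_P(Pi)))` are
equivalent, i.e. each admits a zero-round relaxation to the other. -/
theorem tau_tripotent
    {Δ : ℕ} {Λ ΛP : Type} (P : NEProblem Δ ΛP) (Pi : NEProblem Δ Λ) :
    Relaxes (tau P Pi) (tau P (tau P (tau P Pi))) ∧
    Relaxes (tau P (tau P (tau P Pi))) (tau P Pi) := by
  constructor
  · -- forward: g ↦ (H ↦ H g)
    apply portLocal_relaxes (f := fun g (H : (Λ → SubS ΛP) → SubS ΛP) => H g)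
    exact ⟨fun m hm => eval_node P (tau P Pi) hm, fun m hm => eval_edge P (tau P Pi) hm⟩
  · -- backward: F ↦ (x ↦ F (g ↦ g x))
    apply portLocal_relaxes
      (f := fun (F : ((Λ → SubS ΛP) → SubS ΛP) → SubS ΛP) (x : Λ) =>
        F (fun g : Λ → SubS ΛP => g x))
    constructor
    · intro m hm
      refine ⟨by simpa using hm.1, ?_⟩
      intro C hC p hp1 hp2
      exact back_aux (eval_node P Pi hC) hm.2 hp1 hp2
    · intro m hm
      refine ⟨by simpa using hm.1, ?_⟩
      intro C hC p hp1 hp2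
      exact back_aux (eval_edge P Pi hC) hm.2 hp1 hp2
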